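/- Let I be a finite nonempty set, let P be an irreducible stochastic matrix on I with stationary distribution π, let H be an entrywise nonnegative invertible I×I matrix, and let P̂ be an entrywise nonnegative I×I matrix with H·P̂ᵀ = P·H. Set φ := Hᵀ·π, Λ := D_φ⁻¹·Hᵀ·D_π, and P̃ := D_φ⁻¹·P̂·D_φ, and let ←P(x,y) = π(y)·P(y,x)/π(x). Then P̂ = Hᵀ·D_π·←P·D_π⁻¹·(Hᵀ)⁻¹, Λ is invertible with P̃ = Λ·←P·Λ⁻¹, and the characteristic polynomials of P, P̂ and P̃ all coincide. -/

import Mathlib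

open Matrix Finset Polynomial

lemma charpoly_conj_aux {I : Type*} [Fintype I] [DecidableEq I]
    (A B : Matrix I I ℝ) (hA : IsUnit A.det) :
    (A * B * A⁻¹).charpoly = B.charpoly := by
  have hmap : ∀ M N : Matrix I I ℝ,
      (M * N).map (C : ℝ →+* ℝ[X]) = M.map C * N.map C := fun M N => Matrix.map_mul
  have hcm : charmatrix (A * B * A⁻¹) = A.map C * charmatrix B * (A⁻¹).map C := by
    unfold charmatrix
    simp only [RingHom.mapMatrix_apply, mul_sub, sub_mul, hmap]
    congr 1
    have h1 : A.map (C : ℝ →+* ℝ[X]) * Matrix.scalar I (X : ℝ[X]) * (A⁻¹).map C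
        = Matrix.scalar I (X : ℝ[X]) * (A.map C * (A⁻¹).map C) := by
      rw [← mul_assoc, (Matrix.scalar_commute (X : ℝ[X]) (Commute.all _) (A.map C)).eq,
        mul_assoc]
    rw [h1, ← hmap, Matrix.mul_nonsing_inv _ hA]
    simp
  have hdet : (A.map (C : ℝ →+* ℝ[X])).det * ((A⁻¹).map (C : ℝ →+* ℝ[X])).det = 1 := by
    rw [← RingHom.mapMatrix_apply, ← RingHom.mapMatrix_apply, ← RingHom.map_det,
      ← RingHom.map_det, ← Polynomial.C_mul,
      Matrix.det_nonsing_inv, Ring.mul_inverse_cancel _ hA, Polynomial.C_1]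
  rw [Matrix.charpoly, Matrix.charpoly, hcm, Matrix.det_mul, Matrix.det_mul]
  rw [mul_comm ((A.map _).det), mul_assoc, hdet, mul_one]

lemma charpoly_transpose_aux {I : Type*} [Fintype I] [DecidableEq I]
    (B : Matrix I I ℝ) : (Bᵀ).charpoly = B.charpoly := by
  have hcm : charmatrix (Bᵀ) = (charmatrix B)ᵀ := by
    apply Matrix.ext; intro i j
    by_cases h : i = j
    · subst h; simp [charmatrix_apply]
    · simp [charmatrix_apply_ne _ _ _ h, charmatrix_apply_ne _ _ _ (Ne.symm h)]
  rw [Matrix.charpoly, Matrix.charpoly, hcm, Matrix.det_transpose]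

/-- The reversed kernel `←P(x,y) = π(y)·P(y,x)/π(x)`. -/
noncomputable def revKernel {I : Type*} (P : Matrix I I ℝ) (π : I → ℝ) : Matrix I I ℝ :=
  Matrix.of fun x y => π y * P y x / π x

/-- Theorem 1 (vi): in the finite nonsingular case,
`P̂ = Hᵀ·D_π·←P·D_π⁻¹·(Hᵀ)⁻¹`, `Λ` is invertible with `P̃ = Λ·←P·Λ⁻¹`,
and `P`, `P̂`, `P̃` have the same characteristic polynomial. -/
theorem stmt4 {I : Type*} [Fintype I] [DecidableEq I] [Nonempty I]
    (P : Matrix I I ℝ) (π : I → ℝ) (H : Matrix I I ℝ) (Phat : Matrix I I ℝ)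
    (hP0 : ∀ x y, 0 ≤ P x y) (hP1 : ∀ x, ∑ y, P x y = 1)
    (hirr : ∀ x y, ∃ n ≥ 1, 0 < (P ^ n) x y)
    (hπpos : ∀ x, 0 < π x) (hπ1 : ∑ x, π x = 1)
    (hπP : ∀ y, ∑ x, π x * P x y = π y)
    (hH0 : ∀ x y, 0 ≤ H x y) (hHunit : IsUnit H.det)
    (hPhat0 : ∀ x y, 0 ≤ Phat x y)
    (hdual : H * Phatᵀ = P * H) :
    let φ : I → ℝ := Hᵀ.mulVec π
    let Λ : Matrix I I ℝ := Matrix.diagonal (fun y => (φ y)⁻¹) * Hᵀ * Matrix.diagonal π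
    let Ptil : Matrix I I ℝ := Matrix.diagonal (fun y => (φ y)⁻¹) * Phat * Matrix.diagonal φ
    Phat = Hᵀ * Matrix.diagonal π * revKernel P π *
      Matrix.diagonal (fun x => (π x)⁻¹) * (Hᵀ)⁻¹ ∧
    IsUnit Λ.det ∧ Ptil = Λ * revKernel P π * Λ⁻¹ ∧
    P.charpoly = Phat.charpoly ∧ Phat.charpoly = Ptil.charpoly := by
  intro φ Λ Ptil
  have hπne : ∀ x, π x ≠ 0 := fun x => (hπpos x).ne'
  have hHT : IsUnit (Hᵀ).det := by rwa [Matrix.det_transpose]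
  -- φ is positive
  have hφpos : ∀ y, 0 < φ y := by
    intro y
    have hcol : ∃ x, 0 < H x y := by
      by_contra h
      push_neg at h
      have hz : ∀ x, H x y = 0 := fun x => le_antisymm (h x) (hH0 x y)
      have : H.det = 0 := Matrix.det_eq_zero_of_column_eq_zero y hz
      rw [this] at hHunit
      exact (by norm_num : ¬ IsUnit (0 : ℝ)) hHunit
    obtain ⟨x, hx⟩ := hcol
    have hφy : φ y = ∑ x, H x y * π x := by
      simp [φ, Matrix.mulVec, dotProduct, Matrix.transpose_apply]
    rw [hφy]
    exact Finset.sum_pos' (fun i _ => mul_nonneg (hH0 i y) (hπpos i).le)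
      ⟨x, Finset.mem_univ x, mul_pos hx (hπpos x)⟩
  have hφne : ∀ y, φ y ≠ 0 := fun y => (hφpos y).ne'
  -- key: D_π * revKernel * D_π⁻¹ = Pᵀ
  have hrev : Matrix.diagonal π * revKernel P π * Matrix.diagonal (fun x => (π x)⁻¹) = Pᵀ := by
    ext x y
    simp only [Matrix.diagonal_mul, Matrix.mul_diagonal, revKernel, Matrix.of_apply,
      Matrix.transpose_apply]
    field_simp
    exact mul_div_cancel_left₀ _ (mul_ne_zero (hπne x) (hπne y))
  have hππ : Matrix.diagonal π * Matrix.diagonal (fun x => (π x)⁻¹) = 1 := by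
    rw [Matrix.diagonal_mul_diagonal]
    have : (fun x => π x * (π x)⁻¹) = fun _ => (1 : ℝ) :=
      funext fun x => mul_inv_cancel₀ (hπne x)
    rw [this, Matrix.diagonal_one]
  have hφφ : Matrix.diagonal (fun y => (φ y)⁻¹) * Matrix.diagonal φ = 1 := by
    rw [Matrix.diagonal_mul_diagonal]
    have : (fun x => (φ x)⁻¹ * φ x) = fun _ => (1 : ℝ) :=
      funext fun x => inv_mul_cancel₀ (hφne x)
    rw [this, Matrix.diagonal_one]
  have hφφ' : Matrix.diagonal φ * Matrix.diagonal (fun y => (φ y)⁻¹) = 1 := by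
    rw [Matrix.diagonal_mul_diagonal]
    have : (fun x => φ x * (φ x)⁻¹) = fun _ => (1 : ℝ) :=
      funext fun x => mul_inv_cancel₀ (hφne x)
    rw [this, Matrix.diagonal_one]
  -- Phat * Hᵀ = Hᵀ * Pᵀ
  have hdual' : Phat * Hᵀ = Hᵀ * Pᵀ := by
    have := congrArg Matrix.transpose hdual
    simpa [Matrix.transpose_mul] using this
  have h1 : Phat = Hᵀ * Matrix.diagonal π * revKernel P π *
      Matrix.diagonal (fun x => (π x)⁻¹) * (Hᵀ)⁻¹ := by
    have key : Hᵀ * Matrix.diagonal π * revKernel P π * Matrix.diagonal (fun x => (π x)⁻¹)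
        = Hᵀ * Pᵀ := by
      rw [mul_assoc, mul_assoc, ← mul_assoc (Matrix.diagonal π), hrev]
    rw [key, ← hdual', Matrix.mul_nonsing_inv_cancel_right _ _ hHT]
  -- Λ is a unit
  have hdiagφ : IsUnit (Matrix.diagonal (fun y => (φ y)⁻¹)).det := by
    rw [Matrix.det_diagonal]
    exact isUnit_iff_ne_zero.2 (Finset.prod_ne_zero_iff.2 fun i _ => inv_ne_zero (hφne i))
  have hdiagπ : IsUnit (Matrix.diagonal π).det := by
    rw [Matrix.det_diagonal]
    exact isUnit_iff_ne_zero.2 (Finset.prod_ne_zero_iff.2 fun i _ => hπne i)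
  have hΛ : IsUnit Λ.det := by
    show IsUnit (Matrix.diagonal (fun y => (φ y)⁻¹) * Hᵀ * Matrix.diagonal π).det
    rw [Matrix.det_mul, Matrix.det_mul]
    exact (hdiagφ.mul hHT).mul hdiagπ
  -- Λ⁻¹
  have hΛinv : Λ⁻¹ = Matrix.diagonal (fun x => (π x)⁻¹) * (Hᵀ)⁻¹ * Matrix.diagonal φ := by
    apply Matrix.inv_eq_right_inv
    show Matrix.diagonal (fun y => (φ y)⁻¹) * Hᵀ * Matrix.diagonal π *
      (Matrix.diagonal (fun x => (π x)⁻¹) * (Hᵀ)⁻¹ * Matrix.diagonal φ) = 1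
    calc Matrix.diagonal (fun y => (φ y)⁻¹) * Hᵀ * Matrix.diagonal π *
          (Matrix.diagonal (fun x => (π x)⁻¹) * (Hᵀ)⁻¹ * Matrix.diagonal φ)
        = Matrix.diagonal (fun y => (φ y)⁻¹) * (Hᵀ *
            ((Matrix.diagonal π * Matrix.diagonal (fun x => (π x)⁻¹)) * (Hᵀ)⁻¹)) *
            Matrix.diagonal φ := by simp only [mul_assoc]
      _ = 1 := by
          rw [hππ, one_mul, Matrix.mul_nonsing_inv _ hHT, mul_one, hφφ]
  -- Ptil = Λ * revKernel * Λ⁻¹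
  have h3 : Ptil = Λ * revKernel P π * Λ⁻¹ := by
    show Matrix.diagonal (fun y => (φ y)⁻¹) * Phat * Matrix.diagonal φ
      = Λ * revKernel P π * Λ⁻¹
    rw [hΛinv]
    show Matrix.diagonal (fun y => (φ y)⁻¹) * Phat * Matrix.diagonal φ
      = Matrix.diagonal (fun y => (φ y)⁻¹) * Hᵀ * Matrix.diagonal π * revKernel P π *
        (Matrix.diagonal (fun x => (π x)⁻¹) * (Hᵀ)⁻¹ * Matrix.diagonal φ)
    rw [h1]
    simp only [mul_assoc]
  refine ⟨h1, hΛ, h3, ?_, ?_⟩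
  · -- P.charpoly = Phat.charpoly
    have h2 : Phat = Hᵀ * Pᵀ * (Hᵀ)⁻¹ := by
      rw [← hdual', Matrix.mul_nonsing_inv_cancel_right _ _ hHT]
    rw [h2, charpoly_conj_aux _ _ hHT, charpoly_transpose_aux]
  · -- Phat.charpoly = Ptil.charpoly
    have hinv : (Matrix.diagonal (fun y => (φ y)⁻¹))⁻¹ = Matrix.diagonal φ :=
      Matrix.inv_eq_right_inv hφφ
    have : Ptil = Matrix.diagonal (fun y => (φ y)⁻¹) * Phat *
        (Matrix.diagonal (fun y => (φ y)⁻¹))⁻¹ := by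
      rw [hinv]
    rw [this, charpoly_conj_aux _ _ hdiagφ]
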